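/- Suppose the sets I_1,…,I_s ⊆ {1,…,n} have pairwise disjoint associated element sets Y_1,…,Y_s ⊆ {1,…,q} (where Y_k = E(j) for any j ∈ I_k), and f = Σᵢ₌₁^q fᵢ is coordinate partially separable with domains X_i. Then for steps s¹,…,s^s ∈ ℝⁿ with each s^k supported on I_k, the total decrease satisfies f(x + Σ_k s^k) − f(x) = Σ_k (f(x + s^k) − f(x)). -/

import Mathlib

/-- Independent-subspace decomposition: if the variable-index sets `I k` have
pairwise disjoint associated element sets `Y k` (with `E j = Y k` for `j ∈ I k`),
then for steps `s k` supported on `I k`, the total decrease of `f` is the sum of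
the decreases of the individual steps. -/
theorem stmt_4 (n q m : ℕ) (X : Fin q → Finset (Fin n))
    (f : (Fin n → ℝ) → ℝ) (fi : Fin q → (Fin n → ℝ) → ℝ)
    (hf : ∀ x, f x = ∑ i, fi i x)
    (hdep : ∀ i : Fin q, ∀ x y : Fin n → ℝ,
      (∀ j ∈ X i, x j = y j) → fi i x = fi i y)
    (I : Fin m → Finset (Fin n)) (Y : Fin m → Finset (Fin q))
    (hY : ∀ k, ∀ j ∈ I k,
      (Finset.univ.filter fun i : Fin q => j ∈ X i) = Y k)
    (hYdisj : ∀ k₁ k₂ : Fin m, k₁ ≠ k₂ → Y k₁ ∩ Y k₂ = ∅)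
    (s : Fin m → (Fin n → ℝ))
    (hs : ∀ k, ∀ j ∉ I k, s k j = 0)
    (x : Fin n → ℝ) :
    f (x + ∑ k, s k) - f x = ∑ k, (f (x + s k) - f x) := by
  have key : ∀ i : Fin q, ∀ k : Fin m, i ∉ Y k → ∀ j ∈ X i, s k j = 0 := by
    intro i k hik j hj
    by_cases hjI : j ∈ I k
    · exact absurd (by rw [← hY k j hjI]; simp [hj]) hik
    · exact hs k j hjI
  simp only [hf]
  rw [← Finset.sum_sub_distrib]
  have : ∀ k : Fin m, (∑ i, fi i (x + s k)) - ∑ i, fi i x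
      = ∑ i, (fi i (x + s k) - fi i x) := fun k => (Finset.sum_sub_distrib _ _).symm
  simp only [this]
  rw [Finset.sum_comm]
  refine Finset.sum_congr rfl fun i _ => ?_
  by_cases h : ∃ k, i ∈ Y k
  · obtain ⟨k₀, hk₀⟩ := h
    have hne : ∀ k : Fin m, k ≠ k₀ → i ∉ Y k := by
      intro k hk hik
      have := hYdisj k k₀ hk
      have : i ∈ Y k ∩ Y k₀ := Finset.mem_inter.mpr ⟨hik, hk₀⟩
      rw [hYdisj k k₀ hk] at this
      exact absurd this (Finset.notMem_empty i)
    have hzero : ∀ k : Fin m, k ≠ k₀ → fi i (x + s k) - fi i x = 0 := by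
      intro k hk
      have : fi i (x + s k) = fi i x := by
        apply hdep
        intro j hj
        simp [key i k (hne k hk) j hj]
      rw [this, sub_self]
    rw [Finset.sum_eq_single k₀ (fun k _ hk => hzero k hk) (by simp)]
    congr 1
    apply hdep
    intro j hj
    simp only [Pi.add_apply, Finset.sum_apply]
    congr 1
    rw [Finset.sum_eq_single k₀ (fun k _ hk => key i k (hne k hk) j hj) (by simp)]
  · push_neg at h
    have h1 : fi i (x + ∑ k, s k) = fi i x := by
      apply hdep
      intro j hj
      simp only [Pi.add_apply, Finset.sum_apply]
      rw [Finset.sum_eq_zero fun k _ => key i k (h k) j hj, add_zero]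
    have h2 : ∀ k : Fin m, fi i (x + s k) - fi i x = 0 := by
      intro k
      have : fi i (x + s k) = fi i x := by
        apply hdep; intro j hj; simp [key i k (h k) j hj]
      rw [this, sub_self]
    simp [h1, h2]
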